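/- Let n ≥ 2. The map (ℝ_{>0})^{n-1} → (ℝ_{>0})^{n-1} sending u = (u_1,...,u_{n-1}) to (φ_1(u),...,φ_{n-1}(u)), where φ_i(u) := u_{i-1}^{-1} u_i^2 u_{i+1}^{-1} with the convention u_0 = u_n = 1, is a bijection. -/

import Mathlib

noncomputable section

namespace PetersonPaper

/-- `u_c` for `c ∈ {0,1,…,n}` (1-based), with the convention `u_0 = u_n = 1`:
for `1 ≤ c ≤ n-1` it is the `c`-th coordinate of `u ∈ ℝ^{n-1}`, and `1`
otherwise. -/
def uext (n : ℕ) (u : Fin (n-1) → ℝ) (c : ℕ) : ℝ :=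
  if h : 1 ≤ c ∧ c ≤ n - 1 then u ⟨c - 1, by omega⟩ else 1

/-- Additive analogue of `uext`, with `x_0 = x_m = 0`. -/
def xext (m : ℕ) (x : Fin m → ℝ) (c : ℕ) : ℝ :=
  if h : 1 ≤ c ∧ c ≤ m then x ⟨c - 1, by omega⟩ else 0

lemma xext_add (m : ℕ) (x y : Fin m → ℝ) (c : ℕ) :
    xext m (x + y) c = xext m x c + xext m y c := by
  unfold xext; split_ifs <;> simp

lemma xext_smul (m : ℕ) (r : ℝ) (x : Fin m → ℝ) (c : ℕ) :
    xext m (r • x) c = r * xext m x c := by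
  unfold xext; split_ifs <;> simp

lemma xext_succ (m : ℕ) (x : Fin m → ℝ) (i : Fin m) :
    xext m x (i.1 + 1) = x i := by
  unfold xext
  rw [dif_pos ⟨by omega, by omega⟩]
  congr

lemma xext_of_gt (m : ℕ) (x : Fin m → ℝ) (c : ℕ) (hc : m < c) :
    xext m x c = 0 := by
  unfold xext; rw [dif_neg (by omega)]

lemma xext_zero (m : ℕ) (x : Fin m → ℝ) : xext m x 0 = 0 := by
  unfold xext; rw [dif_neg (by omega)]

/-- The Cartan-matrix linear map. -/
def T (m : ℕ) : (Fin m → ℝ) →ₗ[ℝ] (Fin m → ℝ) where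
  toFun x := fun i => -(xext m x i.1) + 2 * xext m x (i.1 + 1) - xext m x (i.1 + 2)
  map_add' x y := by funext i; simp [xext_add]; ring
  map_smul' r x := by funext i; simp [xext_smul]; ring

lemma T_injective (m : ℕ) : Function.Injective (T m) := by
  rw [← LinearMap.ker_eq_bot, Submodule.eq_bot_iff]
  intro x hx
  have hT : ∀ i : Fin m, -(xext m x i.1) + 2 * xext m x (i.1 + 1) - xext m x (i.1 + 2) = 0 := by
    intro i
    have := congrFun hx i
    simpa [T] using this
  set a := xext m x 1 with ha
  have H : ∀ c, c ≤ m + 1 → xext m x c = c * a := by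
    intro c
    induction c using Nat.strong_induction_on with
    | _ c ih =>
      match c with
      | 0 => intro _; simp [xext_zero]
      | 1 => intro _; simp [ha]
      | (k + 2) =>
        intro hc
        have hk : k < m := by omega
        have h1 := ih k (by omega) (by omega)
        have h2 := ih (k + 1) (by omega) (by omega)
        have h3 := hT ⟨k, hk⟩
        simp only at h3
        push_cast
        push_cast at h1 h2
        nlinarith [h1, h2, h3]
  have ha0 : a = 0 := by
    have h1 := H (m + 1) le_rfl
    rw [xext_of_gt m x (m + 1) (by omega)] at h1
    have : ((m : ℝ) + 1) ≠ 0 := by positivity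
    push_cast at h1
    field_simp at h1
    exact (mul_eq_zero.mp h1.symm).resolve_left this
  funext i
  have := H (i.1 + 1) (by omega)
  rw [xext_succ] at this
  simp [this, ha0]

lemma T_surjective (m : ℕ) : Function.Surjective (T m) :=
  (LinearMap.injective_iff_surjective).mp (T_injective m)

lemma exp_combo (a b c : ℝ) :
    (Real.exp a)⁻¹ * (Real.exp b) ^ 2 * (Real.exp c)⁻¹ = Real.exp (-a + 2 * b - c) := by
  rw [show -a + 2 * b - c = (-a) + b + b + (-c) by ring,
    Real.exp_add, Real.exp_add, Real.exp_add, Real.exp_neg, Real.exp_neg]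
  ring

lemma uext_log (n : ℕ) (u : Fin (n-1) → ℝ) (hu : ∀ i, 0 < u i) (c : ℕ) :
    uext n u c = Real.exp (xext (n-1) (fun i => Real.log (u i)) c) := by
  unfold uext xext
  split_ifs with h
  · exact (Real.exp_log (hu _)).symm
  · exact Real.exp_zero.symm

lemma uext_exp (n : ℕ) (x : Fin (n-1) → ℝ) (c : ℕ) :
    uext n (fun i => Real.exp (x i)) c = Real.exp (xext (n-1) x c) := by
  unfold uext xext
  split_ifs with h
  · rfl
  · exact Real.exp_zero.symm

/-- Lemma: for `n ≥ 2`, the map `(ℝ_{>0})^{n-1} → (ℝ_{>0})^{n-1}` given by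
`φ_i(u) = u_{i-1}⁻¹ u_i² u_{i+1}⁻¹` (with `u_0 = u_n = 1`) is a bijection. -/
theorem cartan_map_bijective_on_pos (n : ℕ) (hn : 2 ≤ n) :
    Set.BijOn
      (fun (u : Fin (n-1) → ℝ) (i : Fin (n-1)) =>
        (uext n u i.1)⁻¹ * (uext n u (i.1 + 1)) ^ 2 * (uext n u (i.1 + 2))⁻¹)
      { u : Fin (n-1) → ℝ | ∀ i, 0 < u i }
      { u : Fin (n-1) → ℝ | ∀ i, 0 < u i } := by
  have key : ∀ (u : Fin (n-1) → ℝ), (∀ i, 0 < u i) → ∀ i : Fin (n-1),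
      (uext n u i.1)⁻¹ * (uext n u (i.1 + 1)) ^ 2 * (uext n u (i.1 + 2))⁻¹
        = Real.exp (T (n-1) (fun j => Real.log (u j)) i) := by
    intro u hu i
    rw [uext_log n u hu, uext_log n u hu, uext_log n u hu, exp_combo]
    rfl
  refine ⟨?_, ?_, ?_⟩
  · intro u hu
    simp only [Set.mem_setOf_eq] at hu ⊢
    intro i
    rw [key u hu i]
    exact Real.exp_pos _
  · intro u hu v hv h
    simp only [Set.mem_setOf_eq] at hu hv
    have hxy : T (n-1) (fun j => Real.log (u j)) = T (n-1) (fun j => Real.log (v j)) := by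
      funext i
      have := congrFun h i
      simp only at this
      rw [key u hu i, key v hv i] at this
      exact Real.exp_injective this
    have hlog : (fun j => Real.log (u j)) = (fun j => Real.log (v j)) :=
      T_injective (n-1) hxy
    funext i
    have := congrFun hlog i
    calc u i = Real.exp (Real.log (u i)) := (Real.exp_log (hu i)).symm
      _ = Real.exp (Real.log (v i)) := by rw [this]
      _ = v i := Real.exp_log (hv i)
  · intro v hv
    simp only [Set.mem_setOf_eq] at hv
    obtain ⟨x, hx⟩ := T_surjective (n-1) (fun j => Real.log (v j))
    refine ⟨fun i => Real.exp (x i), ?_, ?_⟩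
    · intro i; exact Real.exp_pos _
    · funext i
      simp only
      rw [uext_exp, uext_exp, uext_exp, exp_combo]
      have : -(xext (n-1) x i.1) + 2 * xext (n-1) x (i.1 + 1) - xext (n-1) x (i.1 + 2)
          = T (n-1) x i := rfl
      rw [this, hx]
      exact Real.exp_log (hv i)

end PetersonPaper
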